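/- arXiv:2304.08170 — 2 statements merged into one kernel-verified Lean document; each statement's English description precedes it below -/
import Mathlib

section
/- For a finite group G, |L(G)|^2 · sd(G) = Σ_{H ∈ L(G)} F₂(H), i.e., the number of pairs of commuting subgroups of G equals the sum over all subgroups H of G of the number of factorizations H = AB with A, B ≤ H. -/
open scoped Pointwise

/-- The subgroup commutativity degree of `G`: the probability that two
randomly chosen subgroups of `G` permute (setwise product). -/
noncomputable def sd (G : Type*) [Group G] : ℚ :=
  (Nat.card {p : Subgroup G × Subgroup G //
      (p.1 : Set G) * (p.2 : Set G) = (p.2 : Set G) * (p.1 : Set G)} : ℚ) /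
    (Nat.card (Subgroup G) : ℚ) ^ 2

/-- The factorization number of `G`: the number of ordered pairs of subgroups
`(H, K)` with `HK = G` (setwise product). -/
noncomputable def F₂ (G : Type*) [Group G] : ℕ :=
  Nat.card {p : Subgroup G × Subgroup G //
      (p.1 : Set G) * (p.2 : Set G) = (Set.univ : Set G)}

/-- The smallest sublattice of the subgroup lattice of `G` containing all
subgroups that permute with every subgroup of `G`. -/
def permCenter (G : Type*) [Group G] : Set (Subgroup G) :=
  latticeClosure {Y : Subgroup G |
    ∀ X : Subgroup G, (X : Set G) * (Y : Set G) = (Y : Set G) * (X : Set G)}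

/-- The non-permutability graph of subgroups of `G`, with vertices
`L(G) \ permCenter G` and edges joining `X, Y` with `XY ≠ YX`. -/
def npGraph (G : Type*) [Group G] : SimpleGraph {X : Subgroup G // X ∉ permCenter G} where
  Adj X Y := (X.1 : Set G) * (Y.1 : Set G) ≠ (Y.1 : Set G) * (X.1 : Set G)
  symm := ⟨fun _ _ h => Ne.symm h⟩
  loopless := ⟨fun _ h => h rfl⟩

section aux
variable {G : Type*} [Group G]

/-- If X and Y permute, then the carrier of X ⊔ Y is XY. -/
lemma coe_sup_of_comm {X Y : Subgroup G}
    (h : (X : Set G) * (Y : Set G) = (Y : Set G) * (X : Set G)) :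
    ((X ⊔ Y : Subgroup G) : Set G) = (X : Set G) * (Y : Set G) := by
  let K : Subgroup G :=
  { carrier := (X : Set G) * (Y : Set G)
    one_mem' := ⟨1, one_mem X, 1, one_mem Y, one_mul 1⟩
    mul_mem' := by
      rintro a b ⟨x₁, hx₁, y₁, hy₁, rfl⟩ ⟨x₂, hx₂, y₂, hy₂, rfl⟩
      have : y₁ * x₂ ∈ (X : Set G) * (Y : Set G) := by
        rw [h]; exact Set.mul_mem_mul hy₁ hx₂
      obtain ⟨x₃, hx₃, y₃, hy₃, hxy⟩ := this
      refine ⟨x₁ * x₃, mul_mem hx₁ hx₃, y₃ * y₂, mul_mem hy₃ hy₂, ?_⟩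
      have hxy' : x₃ * y₃ = y₁ * x₂ := hxy
      show x₁ * x₃ * (y₃ * y₂) = (x₁ * y₁) * (x₂ * y₂)
      rw [show (x₁ * y₁) * (x₂ * y₂) = x₁ * (y₁ * (x₂ * y₂)) by group]
      rw [mul_assoc x₁, ← mul_assoc x₃, hxy', mul_assoc y₁]
    inv_mem' := by
      rintro a ⟨x, hx, y, hy, rfl⟩
      show ((x : G) * y)⁻¹ ∈ (X : Set G) * (Y : Set G)
      rw [h, mul_inv_rev]
      exact Set.mul_mem_mul (inv_mem hy) (inv_mem hx) }
  have : X ⊔ Y = K := by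
    rw [Subgroup.sup_eq_closure_mul]
    exact Subgroup.closure_eq K
  rw [this]; rfl

lemma coe_mul_comm_of_eq {A B : Subgroup G} {s : Set G}
    (h : (A : Set G) * (B : Set G) = s) (hs : s⁻¹ = s) :
    (B : Set G) * (A : Set G) = s := by
  have := congrArg (·⁻¹) h
  simpa [mul_inv_rev, inv_coe_set, hs] using this

/-- The fiberwise equivalence. -/
noncomputable def fiberEquiv (H : Subgroup G) :
    {p : {p : Subgroup G × Subgroup G //
        (p.1 : Set G) * (p.2 : Set G) = (p.2 : Set G) * (p.1 : Set G)} //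
        p.1.1 ⊔ p.1.2 = H} ≃
    {q : Subgroup H × Subgroup H //
        (q.1 : Set H) * (q.2 : Set H) = (Set.univ : Set H)} where
  toFun p := ⟨(p.1.1.1.subgroupOf H, p.1.1.2.subgroupOf H), by
    obtain ⟨⟨⟨X, Y⟩, hcomm⟩, hsup⟩ := p
    have hX : X ≤ H := hsup ▸ le_sup_left
    have hY : Y ≤ H := hsup ▸ le_sup_right
    ext g
    simp only [Set.mem_univ, iff_true]
    have hg : (g : G) ∈ X ⊔ Y := hsup ▸ g.2
    rw [← SetLike.mem_coe, coe_sup_of_comm hcomm] at hg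
    obtain ⟨x, hx, y, hy, hxy⟩ := hg
    exact ⟨⟨x, hX hx⟩, hx, ⟨y, hY hy⟩, hy, Subtype.ext hxy⟩⟩
  invFun q := ⟨⟨(q.1.1.map H.subtype, q.1.2.map H.subtype), by
      have h1 : ((q.1.1.map H.subtype : Subgroup G) : Set G) *
          (q.1.2.map H.subtype : Set G) = (H : Set G) := by
        rw [Subgroup.coe_map, Subgroup.coe_map, ← Set.image_mul, q.2,
          Set.image_univ, Subgroup.coe_subtype, Subtype.range_coe_subtype]
        rfl
      have h2 := coe_mul_comm_of_eq h1 inv_coe_set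
      rw [h1, h2]⟩, by
    have h1 : ((q.1.1.map H.subtype : Subgroup G) : Set G) *
        (q.1.2.map H.subtype : Set G) = (H : Set G) := by
      rw [Subgroup.coe_map, Subgroup.coe_map, ← Set.image_mul, q.2,
        Set.image_univ, Subgroup.coe_subtype, Subtype.range_coe_subtype]
      rfl
    have h2 := coe_mul_comm_of_eq h1 inv_coe_set
    apply SetLike.ext'
    rw [coe_sup_of_comm (h1.trans h2.symm), h1]⟩
  left_inv := by
    rintro ⟨⟨⟨X, Y⟩, hcomm⟩, hsup⟩
    have hX : X ≤ H := hsup ▸ le_sup_left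
    have hY : Y ≤ H := hsup ▸ le_sup_right
    apply Subtype.ext; apply Subtype.ext
    simp [Subgroup.subgroupOf_map_subtype, inf_eq_left.mpr hX, inf_eq_left.mpr hY]
  right_inv := by
    rintro ⟨⟨A, B⟩, hAB⟩
    apply Subtype.ext
    simp only [Prod.mk.injEq]
    constructor <;>
    · rw [← Subgroup.comap_subtype]
      exact Subgroup.comap_map_eq_self_of_injective H.subtype_injective _

end aux

theorem stmt2 (G : Type*) [Group G] [Finite G] :
    (Nat.card (Subgroup G) : ℚ) ^ 2 * sd G = ∑ᶠ H : Subgroup G, (F₂ H : ℚ) := by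
  classical
  haveI : Finite (Subgroup G) :=
    Finite.of_injective _ (SetLike.coe_injective (A := Subgroup G))
  have hc : (Nat.card (Subgroup G) : ℚ) ≠ 0 :=
    Nat.cast_ne_zero.mpr Nat.card_pos.ne'
  rw [sd, mul_div_cancel₀ _ (pow_ne_zero 2 hc)]
  haveI := Fintype.ofFinite (Subgroup G)
  rw [finsum_eq_sum_of_fintype]
  have key : Nat.card {p : Subgroup G × Subgroup G //
      (p.1 : Set G) * (p.2 : Set G) = (p.2 : Set G) * (p.1 : Set G)} =
      ∑ H : Subgroup G, F₂ H := by
    rw [Nat.card_congr (Equiv.sigmaFiberEquiv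
      (fun p : {p : Subgroup G × Subgroup G //
        (p.1 : Set G) * (p.2 : Set G) = (p.2 : Set G) * (p.1 : Set G)} =>
        p.1.1 ⊔ p.1.2)).symm]
    haveI : ∀ H : Subgroup G, Fintype {p : {p : Subgroup G × Subgroup G //
        (p.1 : Set G) * (p.2 : Set G) = (p.2 : Set G) * (p.1 : Set G)} //
        p.1.1 ⊔ p.1.2 = H} := fun H => Fintype.ofFinite _
    rw [Nat.card_eq_fintype_card, Fintype.card_sigma]
    congr 1
    ext H
    rw [← Nat.card_eq_fintype_card, Nat.card_congr (fiberEquiv H)]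
    rfl
  rw [key]
  push_cast
  rfl
end

section
/- The non-permutability graph of subgroups of A₄ has 7 vertices: the four subgroups of order 3 and the three subgroups of order 2; its edge set consists of all pairs except the three pairs of distinct order-2 subgroups, giving 18 edges. -/
open scoped Pointwise

namespace A4Aux

abbrev G4 := ↥(alternatingGroup (Fin 4))

def gp : Fin 12 → Equiv.Perm (Fin 4) :=
  ![1, Equiv.swap 0 1 * Equiv.swap 2 3, Equiv.swap 0 2 * Equiv.swap 1 3,
    Equiv.swap 0 3 * Equiv.swap 1 2,
    Equiv.swap 0 1 * Equiv.swap 1 2, Equiv.swap 0 2 * Equiv.swap 2 1,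
    Equiv.swap 0 1 * Equiv.swap 1 3, Equiv.swap 0 3 * Equiv.swap 3 1,
    Equiv.swap 0 2 * Equiv.swap 2 3, Equiv.swap 0 3 * Equiv.swap 3 2,
    Equiv.swap 1 2 * Equiv.swap 2 3, Equiv.swap 1 3 * Equiv.swap 3 2]

instance : DecidablePred (· ∈ alternatingGroup (Fin 4)) :=
  fun _ => decidable_of_iff _ (Equiv.Perm.mem_alternatingGroup).symm

lemma hgp : ∀ i, gp i ∈ alternatingGroup (Fin 4) := by decide

def e (i : Fin 12) : G4 := ⟨gp i, hgp i⟩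

def mtab : Fin 12 → Fin 12 → Fin 12 :=
  ![![0, 1, 2, 3, 4, 5, 6, 7, 8, 9, 10, 11], ![1, 0, 3, 2, 11, 9, 10, 8, 7, 5, 6, 4],
    ![2, 3, 0, 1, 7, 10, 9, 4, 11, 6, 5, 8], ![3, 2, 1, 0, 8, 6, 5, 11, 4, 10, 9, 7],
    ![4, 8, 11, 7, 5, 0, 2, 9, 10, 3, 1, 6], ![5, 10, 6, 9, 0, 4, 11, 3, 1, 7, 8, 2],
    ![6, 9, 5, 10, 3, 8, 7, 0, 2, 11, 4, 1], ![7, 11, 8, 4, 10, 2, 0, 6, 5, 1, 3, 9],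
    ![8, 4, 7, 11, 6, 3, 1, 10, 9, 0, 2, 5], ![9, 6, 10, 5, 1, 11, 4, 2, 0, 8, 7, 3],
    ![10, 5, 9, 6, 2, 7, 8, 1, 3, 4, 11, 0], ![11, 7, 4, 8, 9, 1, 3, 5, 6, 2, 0, 10]]

def itab : Fin 12 → Fin 12 := ![0, 1, 2, 3, 5, 4, 7, 6, 9, 8, 11, 10]

lemma hmul : ∀ i j, e i * e j = e (mtab i j) := by decide
lemma hinv : ∀ i, (e i)⁻¹ = e (itab i) := by decide
lemma h1 : e 0 = 1 := by decide
lemma hinj : Function.Injective e := fun a b h => by revert h; revert a b; decide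
lemma hcard12 : Fintype.card G4 = 12 := by decide
lemma hsurj : Function.Surjective e :=
  ((Fintype.bijective_iff_injective_and_card e).2 ⟨hinj, by simp [hcard12]⟩).2

def isS (s : Finset (Fin 12)) : Prop :=
  0 ∈ s ∧ (∀ i ∈ s, ∀ j ∈ s, mtab i j ∈ s) ∧ ∀ i ∈ s, itab i ∈ s

instance (s : Finset (Fin 12)) : Decidable (isS s) := by
  unfold isS
  exact instDecidableAnd (dp := inferInstance)
    (dq := instDecidableAnd (dp := inferInstance) (dq := inferInstance))

def toSub (s : Finset (Fin 12)) (h : isS s) : Subgroup G4 where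
  carrier := ↑(s.image e)
  one_mem' := by
    refine Finset.mem_coe.2 (Finset.mem_image.2 ⟨0, h.1, h1⟩)
  mul_mem' := by
    rintro a b ha hb
    obtain ⟨i, hi, rfl⟩ := Finset.mem_image.1 (Finset.mem_coe.1 ha)
    obtain ⟨j, hj, rfl⟩ := Finset.mem_image.1 (Finset.mem_coe.1 hb)
    exact Finset.mem_coe.2 (Finset.mem_image.2 ⟨mtab i j, h.2.1 i hi j hj, (hmul i j).symm⟩)
  inv_mem' := by
    rintro a ha
    obtain ⟨i, hi, rfl⟩ := Finset.mem_image.1 (Finset.mem_coe.1 ha)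
    exact Finset.mem_coe.2 (Finset.mem_image.2 ⟨itab i, h.2.2 i hi, (hinv i).symm⟩)

lemma coe_toSub (s : Finset (Fin 12)) (h : isS s) :
    (toSub s h : Set G4) = ↑(s.image e) := rfl

lemma mem_toSub {s : Finset (Fin 12)} {h : isS s} {i : Fin 12} :
    e i ∈ toSub s h ↔ i ∈ s := by
  simp [toSub, Subgroup.mem_mk, Finset.mem_image, hinj.eq_iff]

lemma toSub_inj {s t : Finset (Fin 12)} {h : isS s} {h' : isS t} :
    toSub s h = toSub t h' ↔ s = t := by
  constructor
  · intro he
    ext i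
    rw [← mem_toSub (h := h), ← mem_toSub (h := h'), he]
  · rintro rfl; rfl

lemma hsub : ∀ X : Subgroup G4, ∃ s : Finset (Fin 12), ∃ h : isS s, toSub s h = X := by
  classical
  intro X
  refine ⟨Finset.univ.filter (fun i => e i ∈ X), ⟨?_, ?_, ?_⟩, ?_⟩
  · simp only [Finset.mem_filter, Finset.mem_univ, true_and, h1]
    exact one_mem X
  · intro i hi j hj
    simp only [Finset.mem_filter, Finset.mem_univ, true_and] at *
    rw [← hmul]; exact mul_mem hi hj
  · intro i hi
    simp only [Finset.mem_filter, Finset.mem_univ, true_and] at *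
    rw [← hinv]; exact inv_mem hi
  · ext g
    obtain ⟨i, rfl⟩ := hsurj g
    exact mem_toSub.trans (by simp)

def L : List (Finset (Fin 12)) :=
  [{0}, {0,1}, {0,2}, {0,3}, {0,1,2,3}, {0,4,5}, {0,6,7}, {0,8,9}, {0,10,11}, Finset.univ]

def ofB (b : Fin 12 → Bool) : Finset (Fin 12) := Finset.univ.filter (fun i => b i)

set_option maxHeartbeats 4000000 in
set_option maxRecDepth 20000 in
lemma hB : ∀ b0 b1 b2 b3 b4 b5 b6 b7 b8 b9 b10 b11 : Bool,
    ![b0, b1, b2, b3, b4, b5, b6, b7, b8, b9, b10, b11] 0 = true →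
    (∀ i j : Fin 12, ![b0, b1, b2, b3, b4, b5, b6, b7, b8, b9, b10, b11] i = true → ![b0, b1, b2, b3, b4, b5, b6, b7, b8, b9, b10, b11] j = true → ![b0, b1, b2, b3, b4, b5, b6, b7, b8, b9, b10, b11] (mtab i j) = true) →
    ofB ![b0, b1, b2, b3, b4, b5, b6, b7, b8, b9, b10, b11] ∈ L := by decide

lemma hclsF : ∀ s : Finset (Fin 12), isS s → s ∈ L := by
  intro s hs
  have hv : ![(decide ((0:Fin 12) ∈ s)), (decide ((1:Fin 12) ∈ s)), (decide ((2:Fin 12) ∈ s)), (decide ((3:Fin 12) ∈ s)), (decide ((4:Fin 12) ∈ s)), (decide ((5:Fin 12) ∈ s)), (decide ((6:Fin 12) ∈ s)), (decide ((7:Fin 12) ∈ s)), (decide ((8:Fin 12) ∈ s)), (decide ((9:Fin 12) ∈ s)), (decide ((10:Fin 12) ∈ s)), (decide ((11:Fin 12) ∈ s))] = (fun i : Fin 12 => decide (i ∈ s)) := by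
    funext i; fin_cases i <;> rfl
  have hb : ofB (fun i : Fin 12 => decide (i ∈ s)) = s := by
    ext i; simp [ofB]
  have key := hB (decide ((0:Fin 12) ∈ s)) (decide ((1:Fin 12) ∈ s)) (decide ((2:Fin 12) ∈ s)) (decide ((3:Fin 12) ∈ s)) (decide ((4:Fin 12) ∈ s)) (decide ((5:Fin 12) ∈ s)) (decide ((6:Fin 12) ∈ s)) (decide ((7:Fin 12) ∈ s)) (decide ((8:Fin 12) ∈ s)) (decide ((9:Fin 12) ∈ s)) (decide ((10:Fin 12) ∈ s)) (decide ((11:Fin 12) ∈ s))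
  rw [hv, hb] at key
  apply key
  · simpa using hs.1
  · intro i j hi hj
    simp only [decide_eq_true_eq] at hi hj ⊢
    exact hs.2.1 i hi j hj

lemma hLS : ∀ s ∈ L, isS s := by
  intro s hs
  fin_cases hs <;> decide

lemma hcls : ∀ X : Subgroup G4, ∃ s ∈ L, ∃ h : isS s, X = toSub s h := by
  intro X
  obtain ⟨s, h, rfl⟩ := hsub X
  exact ⟨s, hclsF s h, h, rfl⟩


def mulF (s t : Finset (Fin 12)) : Finset (Fin 12) := (s ×ˢ t).image fun p => mtab p.1 p.2

lemma himage_mul (s t : Finset (Fin 12)) :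
    (s.image e) * (t.image e) = (mulF s t).image e := by
  ext x
  simp only [Finset.mem_mul, Finset.mem_image, mulF, Finset.mem_product]
  constructor
  · rintro ⟨a, ⟨i, hi, rfl⟩, b, ⟨j, hj, rfl⟩, rfl⟩
    exact ⟨mtab i j, ⟨⟨i, j⟩, ⟨hi, hj⟩, rfl⟩, (hmul i j).symm⟩
  · rintro ⟨k, ⟨⟨i, j⟩, ⟨hi, hj⟩, rfl⟩, rfl⟩
    exact ⟨e i, ⟨i, hi, rfl⟩, e j, ⟨j, hj, rfl⟩, hmul i j⟩

lemma hprod {s t : Finset (Fin 12)} (h : isS s) (h' : isS t) :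
    (toSub s h : Set G4) * (toSub t h' : Set G4) = ↑((mulF s t).image e) := by
  rw [coe_toSub, coe_toSub, ← Finset.coe_mul, himage_mul]

lemma hcommIff {s t : Finset (Fin 12)} (h : isS s) (h' : isS t) :
    ((toSub s h : Set G4) * (toSub t h' : Set G4) =
      (toSub t h' : Set G4) * (toSub s h : Set G4)) ↔ mulF s t = mulF t s := by
  rw [hprod h h', hprod h' h, Finset.coe_inj, (Finset.image_injective hinj).eq_iff]

lemma hcard {s : Finset (Fin 12)} (h : isS s) : Nat.card (toSub s h) = s.card := by
  have hc : ((toSub s h : Subgroup G4) : Set G4) = ↑(s.image e) := rfl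
  rw [← SetLike.coe_sort_coe, hc, Nat.card_coe_set_eq, Set.ncard_coe_finset,
    Finset.card_image_of_injective _ hinj]

def c1 : Finset (Fin 12) := {0}
def cV : Finset (Fin 12) := {0, 1, 2, 3}
lemma hc1 : isS c1 := by decide
lemma hcV : isS cV := by decide
lemma hcU : isS (Finset.univ : Finset (Fin 12)) := by decide

def CC : Set (Subgroup G4) := {toSub c1 hc1, toSub cV hcV, toSub Finset.univ hcU}

lemma mem_CC_iff {s : Finset (Fin 12)} {h : isS s} :
    toSub s h ∈ CC ↔ (s = c1 ∨ s = cV ∨ s = Finset.univ) := by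
  simp only [CC, Set.mem_insert_iff, Set.mem_singleton_iff, toSub_inj]

def Scomm : Set (Subgroup G4) :=
  {Y | ∀ X : Subgroup G4, (X : Set G4) * (Y : Set G4) = (Y : Set G4) * (X : Set G4)}

lemma memS_iff {s : Finset (Fin 12)} (h : isS s) :
    toSub s h ∈ Scomm ↔ ∀ t ∈ L, mulF t s = mulF s t := by
  constructor
  · intro hS t ht
    exact (hcommIff (hLS t ht) h).1 (hS (toSub t (hLS t ht)))
  · intro hP X
    obtain ⟨t, ht, h', rfl⟩ := hcls X
    exact (hcommIff h' h).2 (hP t ht)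

lemma keyS1 : ∀ s ∈ L, (s = c1 ∨ s = cV ∨ s = Finset.univ) → ∀ t ∈ L,
    mulF t s = mulF s t := by
  intro s hs hc t ht
  rcases hc with rfl | rfl | rfl <;> fin_cases ht <;>
    set_option maxRecDepth 1200 in decide

lemma keyS2 : ∀ s ∈ L, ¬(s = c1 ∨ s = cV ∨ s = Finset.univ) →
    ∃ t ∈ L, mulF t s ≠ mulF s t := by
  intro s hs
  fin_cases hs <;> intro hn <;>
    first
      | exact absurd (by decide) hn
      | exact ⟨{0,4,5}, by decide, by decide⟩
      | exact ⟨{0,1}, by decide, by decide⟩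

lemma hSC : Scomm = CC := by
  ext Y
  obtain ⟨s, hsL, h, rfl⟩ := hcls Y
  rw [memS_iff h, mem_CC_iff]
  constructor
  · intro hP
    by_contra hn
    obtain ⟨t, htL, hne⟩ := keyS2 s hsL hn
    exact hne (hP t htL)
  · intro hc t ht
    exact keyS1 s hsL hc t ht

lemma toSub_mono {s t : Finset (Fin 12)} {h : isS s} {h' : isS t} (hst : s ⊆ t) :
    toSub s h ≤ toSub t h' := by
  intro x hx
  obtain ⟨i, rfl⟩ := hsurj x
  rw [mem_toSub] at hx ⊢
  exact hst hx

lemma hsubl : IsSublattice CC := by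
  have h12 : toSub c1 hc1 ≤ toSub cV hcV := toSub_mono (by decide)
  have h13 : toSub c1 hc1 ≤ toSub Finset.univ hcU := toSub_mono (by decide)
  have h23 : toSub cV hcV ≤ toSub Finset.univ hcU := toSub_mono (by decide)
  have e12 := sup_eq_right.2 h12
  have e21 := sup_eq_left.2 h12
  have e13 := sup_eq_right.2 h13
  have e31 := sup_eq_left.2 h13
  have e23 := sup_eq_right.2 h23
  have e32 := sup_eq_left.2 h23
  have i12 := inf_eq_left.2 h12
  have i21 := inf_eq_right.2 h12
  have i13 := inf_eq_left.2 h13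
  have i31 := inf_eq_right.2 h13
  have i23 := inf_eq_left.2 h23
  have i32 := inf_eq_right.2 h23
  constructor <;>
  · intro a ha b hb
    simp only [CC, Set.mem_insert_iff, Set.mem_singleton_iff] at ha hb
    rcases ha with rfl | rfl | rfl <;> rcases hb with rfl | rfl | rfl <;>
      simp [CC, e12, e21, e13, e31, e23, e32, i12, i21, i13, i31, i23, i32]

lemma hPC : permCenter G4 = CC := by
  have : permCenter G4 = latticeClosure Scomm := rfl
  rw [this, hSC, hsubl.latticeClosure_eq]

lemma not_mem_PC_iff {s : Finset (Fin 12)} {h : isS s} :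
    toSub s h ∉ permCenter G4 ↔ ¬(s = c1 ∨ s = cV ∨ s = Finset.univ) := by
  rw [hPC, mem_CC_iff]

set_option maxRecDepth 1200 in
lemma key1 : ∀ s ∈ L, (¬(s = c1 ∨ s = cV ∨ s = Finset.univ) ↔
    (s.card = 2 ∨ s.card = 3)) := by
  intro s hs
  fin_cases hs <;> decide

def L7 : Fin 7 → Finset (Fin 12) :=
  ![{0,1}, {0,2}, {0,3}, {0,4,5}, {0,6,7}, {0,8,9}, {0,10,11}]

lemma hL7S : ∀ i : Fin 7, isS (L7 i) := by decide
lemma hL7npc : ∀ i : Fin 7, ¬(L7 i = c1 ∨ L7 i = cV ∨ L7 i = Finset.univ) := by decide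
lemma hL7inj : ∀ i j : Fin 7, L7 i = L7 j → i = j := by decide
set_option maxRecDepth 1200 in
lemma hL7surj : ∀ s ∈ L, ¬(s = c1 ∨ s = cV ∨ s = Finset.univ) → ∃ i, L7 i = s := by
  intro s hs
  fin_cases hs <;> decide

def fV (i : Fin 7) : {X : Subgroup G4 // X ∉ permCenter G4} :=
  ⟨toSub (L7 i) (hL7S i), not_mem_PC_iff.2 (hL7npc i)⟩

lemma hfV : Function.Bijective fV := by
  constructor
  · intro i j hij
    have hv := congrArg Subtype.val hij
    simp only [fV] at hv
    exact hL7inj i j (toSub_inj.1 hv)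
  · rintro ⟨X, hX⟩
    obtain ⟨s, hsL, h, rfl⟩ := hcls X
    obtain ⟨i, hi⟩ := hL7surj s hsL (not_mem_PC_iff.1 hX)
    refine ⟨i, Subtype.ext ?_⟩
    show toSub (L7 i) (hL7S i) = toSub s h
    exact toSub_inj.2 hi

lemma keyAdj : ∀ s ∈ L, ∀ t ∈ L, ¬(s = c1 ∨ s = cV ∨ s = Finset.univ) →
    ¬(t = c1 ∨ t = cV ∨ t = Finset.univ) →
    (mulF s t ≠ mulF t s ↔ (s ≠ t ∧ ¬(s.card = 2 ∧ t.card = 2))) := by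
  intro s hs t ht
  fin_cases hs <;> fin_cases ht <;> intro hs' ht' <;>
    first
      | exact absurd (by decide) hs'
      | exact absurd (by decide) ht'
      | set_option maxRecDepth 1200 in decide

def HG : SimpleGraph (Fin 7) where
  Adj i j := mulF (L7 i) (L7 j) ≠ mulF (L7 j) (L7 i)
  symm := ⟨fun _ _ hh => hh.symm⟩
  loopless := ⟨fun _ hh => hh rfl⟩

instance : DecidableRel HG.Adj :=
  fun i j => decidable_of_iff (mulF (L7 i) (L7 j) ≠ mulF (L7 j) (L7 i)) Iff.rfl

noncomputable def isoHG : HG ≃g npGraph G4 where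
  toEquiv := Equiv.ofBijective fV hfV
  map_rel_iff' := by
    intro a b
    show ((fV a).1 : Set G4) * ((fV b).1 : Set G4) ≠ _ ↔ _
    exact not_congr (hcommIff (hL7S a) (hL7S b))

set_option maxRecDepth 2000 in
lemma hedge : Nat.card (npGraph G4).edgeSet = 18 := by
  rw [← Nat.card_congr isoHG.mapEdgeSet, Nat.card_eq_fintype_card]
  decide

end A4Aux

open A4Aux in
theorem stmt16 :
    ({X : Subgroup (alternatingGroup (Fin 4)) | X ∉ permCenter (alternatingGroup (Fin 4))} =
        {X : Subgroup (alternatingGroup (Fin 4)) | Nat.card X = 2 ∨ Nat.card X = 3}) ∧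
      Nat.card {X : Subgroup (alternatingGroup (Fin 4)) //
        X ∉ permCenter (alternatingGroup (Fin 4))} = 7 ∧
      (∀ X Y : Subgroup (alternatingGroup (Fin 4)),
        X ∉ permCenter (alternatingGroup (Fin 4)) →
        Y ∉ permCenter (alternatingGroup (Fin 4)) →
        ((X : Set (alternatingGroup (Fin 4))) * (Y : Set (alternatingGroup (Fin 4))) ≠
            (Y : Set (alternatingGroup (Fin 4))) * (X : Set (alternatingGroup (Fin 4))) ↔
          X ≠ Y ∧ ¬(Nat.card X = 2 ∧ Nat.card Y = 2))) ∧
      Nat.card (npGraph (alternatingGroup (Fin 4))).edgeSet = 18 := by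
  refine ⟨?_, ?_, ?_, hedge⟩
  · ext X
    obtain ⟨s, hsL, h, rfl⟩ := hcls X
    simp only [Set.mem_setOf_eq, not_mem_PC_iff, hcard h]
    exact key1 s hsL
  · rw [← Nat.card_eq_of_bijective fV hfV, Nat.card_eq_fintype_card, Fintype.card_fin]
  · intro X Y hX hY
    obtain ⟨s, hsL, h, rfl⟩ := hcls X
    obtain ⟨t, htL, h', rfl⟩ := hcls Y
    rw [not_mem_PC_iff] at hX hY
    have e1 := not_congr (hcommIff h h')
    have e2 : (s ≠ t) ↔ (toSub s h ≠ toSub t h') := (not_congr toSub_inj).symm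
    have e3 : (¬(s.card = 2 ∧ t.card = 2)) ↔
        ¬(Nat.card (toSub s h) = 2 ∧ Nat.card (toSub t h') = 2) := by
      rw [hcard h, hcard h']
    exact e1.trans ((keyAdj s hsL t htL hX hY).trans (and_congr e2 e3))
end
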